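/- Let T be a p×p 0-1 matrix realizing row sums x and column sums y, and 0 ≤ k,l ≤ p. Then τ_{kl} = 0 if and only if T is (k,l)-decomposed, i.e., the top-left k×l submatrix of T contains only 0's and the bottom-right (p−k)×(p−l) submatrix contains only 1's. -/

import Mathlib

open Finset

/-- Let T be a p×p 0-1 matrix realizing row sums x and column
sums y, and 0 ≤ k,l ≤ p. Then τ_{kl} = 0 iff T is (k,l)-decomposed: the
top-left k×l submatrix contains only 0's and the bottom-right (p−k)×(p−l)
submatrix contains only 1's. -/
theorem stmt_8 (p : ℕ) (T : ℕ → ℕ → ℕ) (x y : ℕ → ℕ)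
    (h01 : ∀ i ∈ Finset.Icc 1 p, ∀ j ∈ Finset.Icc 1 p, T i j ≤ 1)
    (hrow : ∀ i ∈ Finset.Icc 1 p, ∑ j ∈ Finset.Icc 1 p, T i j = x i)
    (hcol : ∀ j ∈ Finset.Icc 1 p, ∑ i ∈ Finset.Icc 1 p, T i j = y j)
    (k l : ℕ) (hk : k ≤ p) (hl : l ≤ p) :
    (((p : ℤ) - k) * ((p : ℤ) - l)
      + ∑ j ∈ Finset.Icc 1 l, (y j : ℤ)
      - ∑ i ∈ Finset.Icc (k+1) p, (x i : ℤ) = 0) ↔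
    ((∀ i ∈ Finset.Icc 1 k, ∀ j ∈ Finset.Icc 1 l, T i j = 0) ∧
     (∀ i ∈ Finset.Icc (k+1) p, ∀ j ∈ Finset.Icc (l+1) p, T i j = 1)) := by
  set A := ∑ i ∈ Icc 1 k, ∑ j ∈ Icc 1 l, T i j with hA
  set C := ∑ i ∈ Icc (k+1) p, ∑ j ∈ Icc 1 l, T i j with hC
  set D := ∑ i ∈ Icc (k+1) p, ∑ j ∈ Icc (l+1) p, T i j with hD
  have hsplit : ∀ a b : ℕ, a ≤ b → ∀ f : ℕ → ℕ,
      (∑ i ∈ Icc 1 a, f i) + (∑ i ∈ Icc (a+1) b, f i) = ∑ i ∈ Icc 1 b, f i := by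
    intro a b hab f
    have e1 : Icc 1 a = Ioc 0 a := by ext t; simp; omega
    have e2 : Icc (a+1) b = Ioc a b := by ext t; simp
    have e3 : Icc 1 b = Ioc 0 b := by ext t; simp; omega
    rw [e1, e2, e3]
    exact Finset.sum_Ioc_consecutive f (Nat.zero_le a) hab
  have hy : ∑ j ∈ Icc 1 l, y j = A + C := by
    have : ∑ j ∈ Icc 1 l, y j = ∑ j ∈ Icc 1 l, ∑ i ∈ Icc 1 p, T i j := by
      refine Finset.sum_congr rfl fun j hj => ?_
      exact (hcol j (by simp at hj ⊢; omega)).symm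
    rw [this, Finset.sum_comm, ← hsplit k p hk]
  have hx : ∑ i ∈ Icc (k+1) p, x i = C + D := by
    have : ∑ i ∈ Icc (k+1) p, x i
        = ∑ i ∈ Icc (k+1) p, ∑ j ∈ Icc 1 p, T i j := by
      refine Finset.sum_congr rfl fun i hi => ?_
      exact (hrow i (by simp at hi ⊢; omega)).symm
    rw [this, hC, hD, ← Finset.sum_add_distrib]
    refine Finset.sum_congr rfl fun i hi => ?_
    exact (hsplit l p hl _).symm
  have hm : ((p : ℤ) - k) * ((p : ℤ) - l) = (((p-k)*(p-l) : ℕ) : ℤ) := by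
    push_cast [Nat.cast_sub hk, Nat.cast_sub hl]
    ring
  have hle : ∀ i ∈ Icc (k+1) p, ∀ j ∈ Icc (l+1) p, T i j ≤ 1 := by
    intro i hi j hj
    exact h01 i (by simp at hi ⊢; omega) j (by simp at hj ⊢; omega)
  have hDle : D ≤ (p-k)*(p-l) := by
    calc D ≤ ∑ i ∈ Icc (k+1) p, ∑ j ∈ Icc (l+1) p, 1 := by
          refine Finset.sum_le_sum fun i hi => Finset.sum_le_sum fun j hj => hle i hi j hj
      _ = (p-k)*(p-l) := by
          simp [Nat.card_Icc]
  have hAiff : A = 0 ↔ ∀ i ∈ Icc 1 k, ∀ j ∈ Icc 1 l, T i j = 0 := by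
    rw [hA, Finset.sum_eq_zero_iff]
    exact forall₂_congr fun i hi => Finset.sum_eq_zero_iff
  have hDiff : D = (p-k)*(p-l) ↔ ∀ i ∈ Icc (k+1) p, ∀ j ∈ Icc (l+1) p, T i j = 1 := by
    constructor
    · intro hEq i hi j hj
      by_contra hne
      have h0 : T i j = 0 := by have := hle i hi j hj; omega
      have hrowlt : ∑ j' ∈ Icc (l+1) p, T i j' < p - l := by
        calc ∑ j' ∈ Icc (l+1) p, T i j'
            < ∑ j' ∈ Icc (l+1) p, 1 := by
              refine Finset.sum_lt_sum (fun j' hj' => hle i hi j' hj') ⟨j, hj, by omega⟩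
          _ = p - l := by simp [Nat.card_Icc]
      have : D < (p-k)*(p-l) := by
        calc D < ∑ i' ∈ Icc (k+1) p, (p - l) := by
              refine Finset.sum_lt_sum (fun i' hi' => ?_) ⟨i, hi, hrowlt⟩
              calc ∑ j' ∈ Icc (l+1) p, T i' j'
                  ≤ ∑ j' ∈ Icc (l+1) p, 1 := Finset.sum_le_sum fun j' hj' => hle i' hi' j' hj'
                _ = p - l := by simp [Nat.card_Icc]
          _ = (p-k)*(p-l) := by simp [Nat.card_Icc, mul_comm]
      omega
    · intro hAll
      rw [hD]
      calc ∑ i ∈ Icc (k+1) p, ∑ j ∈ Icc (l+1) p, T i j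
          = ∑ i ∈ Icc (k+1) p, ∑ j ∈ Icc (l+1) p, 1 := by
            exact Finset.sum_congr rfl fun i hi => Finset.sum_congr rfl fun j hj => hAll i hi j hj
        _ = (p-k)*(p-l) := by simp [Nat.card_Icc]
  have hyc : ∑ j ∈ Icc 1 l, (y j : ℤ) = ((A + C : ℕ) : ℤ) := by
    rw [← hy]; push_cast; rfl
  have hxc : ∑ i ∈ Icc (k+1) p, (x i : ℤ) = ((C + D : ℕ) : ℤ) := by
    rw [← hx]; push_cast; rfl
  rw [hyc, hxc, hm, ← hAiff, ← hDiff]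
  constructor
  · intro h
    constructor <;> omega
  · rintro ⟨h1, h2⟩
    omega
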